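/- arXiv:2106.02368 — 4 statements merged into one kernel-verified Lean document; each statement's English description precedes it below -/
import Mathlib

section
/- Suppose there exist b₀ ∈ (0,1] and s₁ > 0 such that s·γ'(s) + b₀·γ(s) ≤ 0 for all s ≥ s₁. Then for every s₀ > 0 there is a constant K₀(s₀) > 0 such that s·γ(s) + (b₀ − 1)·Γ(s) ≤ K₀(s₀) for all s ≥ s₀. -/
theorem stmt_3 (γ γ' : ℝ → ℝ) (b₀ s₁ : ℝ)
    (hderiv : ∀ s, 0 < s → HasDerivAt γ (γ' s) s)
    (hderivcont : ContinuousOn γ' (Set.Ioi 0))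
    (hpos : ∀ s, 0 < s → 0 < γ s)
    (hb₀ : b₀ ∈ Set.Ioc (0:ℝ) 1) (hs₁ : 0 < s₁)
    (hcond : ∀ s, s₁ ≤ s → s * γ' s + b₀ * γ s ≤ 0) :
    ∀ s₀ : ℝ, 0 < s₀ → ∃ K > 0, ∀ s, s₀ ≤ s →
      s * γ s + (b₀ - 1) * (∫ η in (1:ℝ)..s, γ η) ≤ K := by
  intro s₀ hs₀
  set t := max s₀ s₁ with ht
  have ht0 : 0 < t := lt_of_lt_of_le hs₀ (le_max_left _ _)
  have hγcont : ContinuousOn γ (Set.Ioi 0) :=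
    fun x hx => ((hderiv x hx).continuousAt).continuousWithinAt
  set F : ℝ → ℝ := fun s => s * γ s + (b₀ - 1) * ∫ η in (1:ℝ)..s, γ η with hF
  have hFderiv : ∀ s, 0 < s → HasDerivAt F (s * γ' s + b₀ * γ s) s := by
    intro s hs
    have hint : HasDerivAt (fun u => ∫ η in (1:ℝ)..u, γ η) (γ s) s := by
      apply intervalIntegral.integral_hasDerivAt_right
      · apply ContinuousOn.intervalIntegrable
        apply hγcont.mono
        intro x hx
        exact lt_of_lt_of_le (lt_min one_pos hs) hx.1
      · exact hγcont.stronglyMeasurableAtFilter isOpen_Ioi s hs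
      · exact hγcont.continuousAt (isOpen_Ioi.mem_nhds hs)
    have h1 : HasDerivAt (fun x => x * γ x) (1 * γ s + s * γ' s) s :=
      (hasDerivAt_id s).mul (hderiv s hs)
    have h2 := h1.add (hint.const_mul (b₀ - 1))
    rw [show s * γ' s + b₀ * γ s = 1 * γ s + s * γ' s + (b₀ - 1) * γ s by ring]
    exact h2
  have hanti : AntitoneOn F (Set.Ici t) := by
    apply antitoneOn_of_deriv_nonpos (convex_Ici t)
    · exact fun x hx => ((hFderiv x (lt_of_lt_of_le ht0 hx)).continuousAt).continuousWithinAt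
    · intro x hx
      rw [interior_Ici] at hx
      exact (hFderiv x (lt_trans ht0 hx)).differentiableAt.differentiableWithinAt
    · intro x hx
      rw [interior_Ici] at hx
      rw [(hFderiv x (lt_trans ht0 hx)).deriv]
      exact hcond x (le_trans (le_max_right _ _) hx.le)
  have hFcont : ContinuousOn F (Set.Icc s₀ t) :=
    fun x hx => ((hFderiv x (lt_of_lt_of_le hs₀ hx.1)).continuousAt).continuousWithinAt
  obtain ⟨M, hM⟩ := (isCompact_Icc.image_of_continuousOn hFcont).bddAbove
  refine ⟨max M 0 + 1, by have := le_max_right M 0; linarith, ?_⟩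
  intro s hs
  have hMt : F t ≤ M := hM ⟨t, ⟨le_max_left _ _, le_refl t⟩, rfl⟩
  have key : F s ≤ M := by
    rcases le_total s t with h | h
    · exact hM ⟨s, ⟨hs, h⟩, rfl⟩
    · exact le_trans (hanti (Set.self_mem_Ici) h h) hMt
  have : F s = s * γ s + (b₀ - 1) * ∫ η in (1:ℝ)..s, γ η := rfl
  have := le_max_left M 0
  linarith [key]
end

section
/- Suppose there are constants l > 0 and 0 < B_l ≤ A_l < ∞ with (1−l)·A_l < B_l, such that liminf_{s→∞} s^l γ(s) = B_l and limsup_{s→∞} s^l γ(s) = A_l. Then there exist b₀ ∈ (0,1] and, for every s₀ > 0, a constant K₀(s₀) > 0 such that s·γ(s) + (b₀ − 1)·Γ(s) ≤ K₀(s₀) for all s ≥ s₀. -/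
set_option maxHeartbeats 1000000

open Filter

theorem stmt_4 (γ γ' : ℝ → ℝ) (l Al Bl : ℝ)
    (hderiv : ∀ s, 0 < s → HasDerivAt γ (γ' s) s)
    (hderivcont : ContinuousOn γ' (Set.Ioi 0))
    (hpos : ∀ s, 0 < s → 0 < γ s)
    (hl : 0 < l) (hBl : 0 < Bl) (hAB : Bl ≤ Al)
    (hcond : (1 - l) * Al < Bl)
    (hliminf : Filter.liminf (fun s : ℝ => s ^ l * γ s) atTop = Bl)
    (hlimsup : Filter.limsup (fun s : ℝ => s ^ l * γ s) atTop = Al) :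
    ∃ b₀ ∈ Set.Ioc (0:ℝ) 1, ∀ s₀ : ℝ, 0 < s₀ → ∃ K > 0, ∀ s, s₀ ≤ s →
      s * γ s + (b₀ - 1) * (∫ η in (1:ℝ)..s, γ η) ≤ K := by
  have hAl : 0 < Al := lt_of_lt_of_le hBl hAB
  have hcont : ContinuousOn γ (Set.Ioi 0) := fun s hs =>
    ((hderiv s hs).continuousAt).continuousWithinAt
  have hInt : ∀ a b : ℝ, 0 < a → 0 < b → IntervalIntegrable γ MeasureTheory.volume a b := by
    intro a b ha hb
    apply ContinuousOn.intervalIntegrable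
    apply hcont.mono
    intro x hx
    exact lt_of_lt_of_le (lt_min ha hb) hx.1
  -- boundedness from limsup/liminf values
  have hbdd_le : IsBoundedUnder (· ≤ ·) atTop (fun s : ℝ => s ^ l * γ s) := by
    by_contra h
    have hempty : {a : ℝ | ∀ᶠ s in atTop, s ^ l * γ s ≤ a} = ∅ := by
      ext a
      simp only [Set.mem_setOf_eq, Set.mem_empty_iff_false, iff_false]
      exact fun ha => h ⟨a, eventually_map.2 ha⟩
    rw [limsup_eq, hempty, Real.sInf_empty] at hlimsup
    linarith
  have hbdd_ge : IsBoundedUnder (· ≥ ·) atTop (fun s : ℝ => s ^ l * γ s) := by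
    by_contra h
    have hempty : {a : ℝ | ∀ᶠ s in atTop, a ≤ s ^ l * γ s} = ∅ := by
      ext a
      simp only [Set.mem_setOf_eq, Set.mem_empty_iff_false, iff_false]
      exact fun ha => h ⟨a, eventually_map.2 ha⟩
    rw [liminf_eq, hempty, Real.sSup_empty] at hliminf
    linarith
  have hub : ∀ ε : ℝ, 0 < ε → ∀ᶠ s in atTop, s ^ l * γ s < Al + ε := fun ε hε =>
    eventually_lt_of_limsup_lt (by rw [hlimsup]; linarith) hbdd_le
  have hlb : ∀ ε : ℝ, 0 < ε → ∀ᶠ s in atTop, Bl - ε < s ^ l * γ s := fun ε hε =>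
    eventually_lt_of_lt_liminf (by rw [hliminf]; linarith) hbdd_ge
  -- compact bound
  have key : ∀ s₀ S : ℝ, 0 < s₀ → ∃ M : ℝ, ∀ s ∈ Set.Icc s₀ S, s * γ s ≤ M := by
    intro s₀ S hs₀
    have hsub : Set.Icc s₀ S ⊆ Set.Ioi 0 := fun x hx => lt_of_lt_of_le hs₀ hx.1
    have hc : ContinuousOn (fun s => s * γ s) (Set.Icc s₀ S) :=
      continuousOn_id.mul (hcont.mono hsub)
    obtain ⟨M, hM⟩ := isCompact_Icc.bddAbove_image hc
    exact ⟨M, fun s hs => hM (Set.mem_image_of_mem _ hs)⟩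
  -- decomposition of s * γ s
  have hsplit : ∀ s : ℝ, 0 < s → s * γ s = s ^ (1 - l) * (s ^ l * γ s) := by
    intro s hs
    rw [← mul_assoc, ← Real.rpow_add hs]
    norm_num
  by_cases hl1 : 1 ≤ l
  · -- case l ≥ 1 : take b₀ = 1
    refine ⟨1, ⟨zero_lt_one, le_refl 1⟩, ?_⟩
    intro s₀ hs₀
    obtain ⟨S, hS⟩ := eventually_atTop.1 (hub 1 zero_lt_one)
    obtain ⟨M, hM⟩ := key s₀ (max S 1) hs₀
    refine ⟨max M (Al + 1), lt_of_lt_of_le (by linarith) (le_max_right _ _), ?_⟩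
    intro s hs
    have hgoal : s * γ s ≤ max M (Al + 1) := by
      rcases le_or_gt s (max S 1) with h | h
      · exact le_trans (hM s ⟨hs, h⟩) (le_max_left _ _)
      · have hs1 : (1:ℝ) ≤ s := le_trans (le_max_right S 1) h.le
        have hs0 : 0 < s := by linarith
        have h1 : s ^ l * γ s < Al + 1 := hS s (le_trans (le_max_left S 1) h.le)
        have h2 : s ^ (1 - l) ≤ 1 := Real.rpow_le_one_of_one_le_of_nonpos hs1 (by linarith)
        have h3 : 0 ≤ s ^ l * γ s := le_of_lt (mul_pos (Real.rpow_pos_of_pos hs0 l) (hpos s hs0))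
        rw [hsplit s hs0]
        calc s ^ (1 - l) * (s ^ l * γ s) ≤ 1 * (s ^ l * γ s) :=
              mul_le_mul_of_nonneg_right h2 h3
          _ ≤ Al + 1 := by rw [one_mul]; exact h1.le
          _ ≤ max M (Al + 1) := le_max_right _ _
    simp only [sub_self, zero_mul, add_zero]
    exact hgoal
  · -- case l < 1
    push_neg at hl1
    have h1l : 0 < 1 - l := by linarith
    set c : ℝ := ((1 - l) * Al / Bl + 1) / 2 with hc_def
    have hq1 : (1 - l) * Al / Bl < 1 := (div_lt_one hBl).2 hcond
    have hq0 : 0 < (1 - l) * Al / Bl := div_pos (mul_pos h1l hAl) hBl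
    have hc0 : 0 < c := by simp only [hc_def]; linarith
    have hc1 : c < 1 := by simp only [hc_def]; linarith
    have hcB : (1 - l) * Al < c * Bl := by
      have : (1 - l) * Al / Bl < c := by simp only [hc_def]; linarith
      calc (1 - l) * Al = ((1 - l) * Al / Bl) * Bl := by field_simp
        _ < c * Bl := by exact mul_lt_mul_of_pos_right this hBl
    set ε : ℝ := (c * Bl - (1 - l) * Al) / (2 * (1 - l + c)) with hε_def
    have hεpos : 0 < ε := div_pos (by linarith) (by linarith)
    have hεkey : (Al + ε) * (1 - l) ≤ c * (Bl - ε) := by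
      have h2 : ε * (1 - l + c) = (c * Bl - (1 - l) * Al) / 2 := by
        rw [hε_def]; field_simp
      nlinarith
    refine ⟨1 - c, ⟨by linarith, by linarith⟩, ?_⟩
    intro s₀ hs₀
    obtain ⟨S₁, hS₁⟩ := eventually_atTop.1 ((hub ε hεpos).and (hlb ε hεpos))
    set S : ℝ := max (max S₁ 1) s₀ with hS_def
    have hSS₁ : S₁ ≤ S := le_trans (le_max_left _ _) (le_max_left _ _)
    have hS1 : (1:ℝ) ≤ S := le_trans (le_max_right _ _) (le_max_left _ _)
    have hSs₀ : s₀ ≤ S := le_max_right _ _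
    have hSpos : 0 < S := by linarith
    obtain ⟨M, hM⟩ := key s₀ S hs₀
    set G₀ : ℝ := ∫ η in (1:ℝ)..s₀, γ η with hG₀_def
    set K₂ : ℝ := c * (Bl - ε) * S ^ (1 - l) / (1 - l) with hK₂_def
    refine ⟨max (max (M - c * G₀) K₂) 0 + 1, by positivity, ?_⟩
    intro s hs
    have hs0 : 0 < s := lt_of_lt_of_le hs₀ hs
    -- lower bound on Γ
    have hΓlb : G₀ ≤ ∫ η in (1:ℝ)..s, γ η := by
      rw [← intervalIntegral.integral_add_adjacent_intervals (hInt 1 s₀ one_pos hs₀)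
        (hInt s₀ s hs₀ hs0)]
      have : 0 ≤ ∫ η in s₀..s, γ η :=
        intervalIntegral.integral_nonneg hs (fun u hu => (hpos u (lt_of_lt_of_le hs₀ hu.1)).le)
      linarith
    rcases le_or_gt s S with h | h
    · -- compact part
      have h1 : s * γ s ≤ M := hM s ⟨hs, h⟩
      have h2 : (1 - c - 1) * (∫ η in (1:ℝ)..s, γ η) ≤ -c * G₀ := by
        have : (1 - c - 1 : ℝ) = -c := by ring
        rw [this]
        nlinarith [hΓlb]
      have := le_max_left (M - c * G₀) K₂
      have := le_max_left (max (M - c * G₀) K₂) (0:ℝ)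
      nlinarith
    · -- tail part
      have hs1 : (1:ℝ) ≤ s := le_trans hS1 h.le
      have hub' : s ^ l * γ s < Al + ε := (hS₁ s (le_trans hSS₁ h.le)).1
      have hxpos : 0 < s ^ (1 - l) := Real.rpow_pos_of_pos hs0 _
      have hTpos : 0 < S ^ (1 - l) := Real.rpow_pos_of_pos hSpos _
      -- Γ s ≥ ∫_1^S + ∫_S^s ≥ 0 + (Bl-ε)(x - T)/(1-l)
      have hΓsplit : (∫ η in (1:ℝ)..s, γ η) =
          (∫ η in (1:ℝ)..S, γ η) + ∫ η in S..s, γ η :=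
        (intervalIntegral.integral_add_adjacent_intervals (hInt 1 S one_pos hSpos)
          (hInt S s hSpos hs0)).symm
      have hΓ1 : 0 ≤ ∫ η in (1:ℝ)..S, γ η :=
        intervalIntegral.integral_nonneg hS1 (fun u hu => (hpos u (lt_of_lt_of_le one_pos hu.1)).le)
      have hmono : (∫ η in S..s, γ η) ≥ ∫ η in S..s, (Bl - ε) * η ^ (-l) := by
        apply intervalIntegral.integral_mono_on h.le ?_ (hInt S s hSpos hs0)
        · intro u hu
          have hu0 : 0 < u := lt_of_lt_of_le hSpos hu.1
          have hul : Bl - ε < u ^ l * γ u := (hS₁ u (le_trans hSS₁ hu.1)).2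
          have hulpos : 0 < u ^ l := Real.rpow_pos_of_pos hu0 l
          rw [Real.rpow_neg hu0.le, mul_inv_le_iff₀ hulpos]
          nlinarith
        · apply ContinuousOn.intervalIntegrable
          apply ContinuousOn.mul continuousOn_const
          intro x hx
          have hx0 : 0 < x := lt_of_lt_of_le (lt_min hSpos hs0) hx.1
          exact (Real.continuousAt_rpow_const x (-l) (Or.inl hx0.ne')).continuousWithinAt
      have hrpow_int : (∫ η in S..s, η ^ (-l)) =
          (s ^ (1 - l) - S ^ (1 - l)) / (1 - l) := by
        rw [integral_rpow (Or.inl (by linarith : (-1:ℝ) < -l)),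
          show -l + 1 = 1 - l from by ring]
      have hcalc : (∫ η in S..s, (Bl - ε) * η ^ (-l)) =
          (Bl - ε) * ((s ^ (1 - l) - S ^ (1 - l)) / (1 - l)) := by
        rw [intervalIntegral.integral_const_mul, hrpow_int]
      have hΓ2 : (Bl - ε) * (s ^ (1 - l) - S ^ (1 - l)) ≤
          (1 - l) * ∫ η in (1:ℝ)..s, γ η := by
        rw [hΓsplit]
        rw [hcalc] at hmono
        have e0 : (1 - l) * ((Bl - ε) * ((s ^ (1 - l) - S ^ (1 - l)) / (1 - l))) =
            (Bl - ε) * (s ^ (1 - l) - S ^ (1 - l)) := by field_simp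
        have e1 : (1 - l) * ((Bl - ε) * ((s ^ (1 - l) - S ^ (1 - l)) / (1 - l))) ≤
            (1 - l) * (∫ η in S..s, γ η) := mul_le_mul_of_nonneg_left hmono h1l.le
        have e2 : (1 - l) * (∫ η in S..s, γ η) ≤
            (1 - l) * ((∫ η in (1:ℝ)..S, γ η) + ∫ η in S..s, γ η) := by nlinarith
        linarith
      -- main estimate
      have hA : s * γ s ≤ s ^ (1 - l) * (Al + ε) := by
        rw [hsplit s hs0]
        exact mul_le_mul_of_nonneg_left hub'.le hxpos.le
      set Γs : ℝ := ∫ η in (1:ℝ)..s, γ η with hΓs_def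
      have haux : (1 - l) * (s * γ s + (1 - c - 1) * Γs) ≤ (1 - l) * K₂ := by
        have hK₂eq : (1 - l) * K₂ = c * (Bl - ε) * S ^ (1 - l) := by
          rw [hK₂_def]; field_simp
        rw [hK₂eq]
        have e1 : (1 - l) * (s * γ s) ≤ (1 - l) * (s ^ (1 - l) * (Al + ε)) :=
          mul_le_mul_of_nonneg_left hA h1l.le
        have e2 : s ^ (1 - l) * ((Al + ε) * (1 - l)) ≤ s ^ (1 - l) * (c * (Bl - ε)) :=
          mul_le_mul_of_nonneg_left hεkey hxpos.le
        have e3 : c * ((Bl - ε) * (s ^ (1 - l) - S ^ (1 - l))) ≤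
            c * ((1 - l) * Γs) :=
          mul_le_mul_of_nonneg_left hΓ2 hc0.le
        linarith
      have hfin : s * γ s + (1 - c - 1) * Γs ≤ K₂ :=
        le_of_mul_le_mul_left haux h1l
      have h4 := le_max_right (M - c * G₀) K₂
      have h5 := le_max_left (max (M - c * G₀) K₂) (0:ℝ)
      linarith
end

section
/- Let θ > 1, b ≥ 0, c ∈ ℝ, κ₀ ≥ 1, κ₁ ≥ 1, and δ₀ ∈ ℝ satisfy δ₀ + c/(θ−1) > 0. Define δ_{j+1} = θ·δ_j + c for j ∈ ℕ. If (η_j)_{j≥0} is a sequence of positive reals with η₀ ≤ κ₁^{δ₀} and η_{j+1} ≤ κ₀ · δ_{j+1}^b · max{κ₁^{δ_{j+1}}, η_j^θ} for all j ∈ ℕ, then the sequence (η_j^{1/δ_j})_{j≥0} is bounded. -/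
set_option maxHeartbeats 1000000 in
theorem stmt_5 (θ b c δ₀ κ₀ κ₁ : ℝ) (δ η : ℕ → ℝ)
    (hθ : 1 < θ) (hb : 0 ≤ b) (hκ₀ : 1 ≤ κ₀) (hκ₁ : 1 ≤ κ₁)
    (hδ₀ : 0 < δ₀ + c / (θ - 1))
    (hδ0 : δ 0 = δ₀)
    (hδrec : ∀ j : ℕ, δ (j + 1) = θ * δ j + c)
    (hηpos : ∀ j : ℕ, 0 < η j)
    (hη0 : η 0 ≤ κ₁ ^ δ₀)
    (hηrec : ∀ j : ℕ, η (j + 1) ≤ κ₀ * δ (j + 1) ^ b * max (κ₁ ^ δ (j + 1)) (η j ^ θ)) :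
    ∃ M : ℝ, ∀ j : ℕ, η j ^ (1 / δ j) ≤ M := by
  have hθ1 : (0:ℝ) < θ - 1 := by linarith
  have hθ0 : (0:ℝ) < θ := by linarith
  obtain ⟨γ, hγdef⟩ : ∃ γ : ℝ, γ = c / (θ - 1) := ⟨_, rfl⟩
  obtain ⟨A, hAdef⟩ : ∃ A : ℝ, A = δ₀ + γ := ⟨_, rfl⟩
  have hA0 : 0 < A := by rw [hAdef, hγdef]; exact hδ₀
  have hcγ : c = (θ - 1) * γ := by rw [hγdef]; field_simp
  have hδeq : ∀ j, δ j = A * θ ^ j - γ := by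
    intro j
    induction j with
    | zero => rw [hδ0, hAdef]; ring
    | succ n ih => rw [hδrec, ih, hcγ]; ring
  have hθpow1 : ∀ j : ℕ, (1:ℝ) ≤ θ ^ j := fun j => one_le_pow₀ hθ.le
  have hθpowpos : ∀ j : ℕ, (0:ℝ) < θ ^ j := fun j => pow_pos hθ0 j
  -- choose N
  obtain ⟨N, hN⟩ := pow_unbounded_of_one_lt (2 * max γ 1 / A) hθ
  have hNA : max γ 1 < A / 2 * θ ^ N := by
    rw [div_lt_iff₀ hA0] at hN
    nlinarith [hθpowpos N]
  have hδge : ∀ j, N ≤ j → A / 2 * θ ^ j ≤ δ j := by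
    intro j hj
    have h1 : θ ^ N ≤ θ ^ j := pow_le_pow_right₀ hθ.le hj
    have h2 : γ ≤ max γ 1 := le_max_left γ 1
    rw [hδeq]; nlinarith
  have hδ1 : ∀ j, N ≤ j → (1:ℝ) ≤ δ j := by
    intro j hj
    have h1 : θ ^ N ≤ θ ^ j := pow_le_pow_right₀ hθ.le hj
    have h2 : (1:ℝ) ≤ max γ 1 := le_max_right γ 1
    have := hδge j hj
    nlinarith
  obtain ⟨L, hLdef⟩ : ∃ L : ℝ, L = Real.log κ₁ := ⟨_, rfl⟩
  obtain ⟨D, hDdef⟩ : ∃ D : ℝ, D = Real.log κ₀ := ⟨_, rfl⟩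
  obtain ⟨T, hTdef⟩ : ∃ T : ℝ, T = Real.log θ := ⟨_, rfl⟩
  have hL0 : 0 ≤ L := hLdef ▸ Real.log_nonneg hκ₁
  have hD0 : 0 ≤ D := hDdef ▸ Real.log_nonneg hκ₀
  have hT0 : 0 ≤ T := hTdef ▸ Real.log_nonneg hθ.le
  have hκ₁0 : (0:ℝ) < κ₁ := by linarith
  obtain ⟨x, hxdef⟩ : ∃ x : ℕ → ℝ, x = fun j => Real.log (η j) := ⟨_, rfl⟩
  have hx : ∀ j, x j = Real.log (η j) := fun j => by rw [hxdef]
  obtain ⟨z, hzdef⟩ : ∃ z : ℕ → ℝ, z = fun j => max (x j) (δ j * L) := ⟨_, rfl⟩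
  have hz : ∀ j, z j = max (x j) (δ j * L) := fun j => by rw [hzdef]
  obtain ⟨P, hPdef⟩ : ∃ P : ℝ, P = D + |c| * L + b * max (Real.log (A + |γ|)) 0 := ⟨_, rfl⟩
  obtain ⟨R, hRdef⟩ : ∃ R : ℝ, R = P + b * T := ⟨_, rfl⟩
  have hP0 : 0 ≤ P := by
    rw [hPdef]
    have h1 : (0:ℝ) ≤ max (Real.log (A + |γ|)) 0 := le_max_right _ _
    have h2 : (0:ℝ) ≤ |c| * L := mul_nonneg (abs_nonneg c) hL0
    nlinarith
  have hR0 : 0 ≤ R := by rw [hRdef]; nlinarith [mul_nonneg hb hT0]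
  -- step inequality
  have hstep : ∀ j, N ≤ j → z (j + 1) ≤ θ * z j + R * ((j:ℝ) + 2) := by
    intro j hj
    have hδj1 : (1:ℝ) ≤ δ (j + 1) := hδ1 (j+1) (by omega)
    have hδjpos : (0:ℝ) < δ (j + 1) := by linarith
    have hmaxpos : (0:ℝ) < max (κ₁ ^ δ (j+1)) (η j ^ θ) :=
      lt_max_of_lt_left (Real.rpow_pos_of_pos hκ₁0 _)
    have hrpos : (0:ℝ) < δ (j+1) ^ b := Real.rpow_pos_of_pos hδjpos b
    have h1 : x (j+1) ≤ D + b * Real.log (δ (j+1)) + max (δ (j+1) * L) (θ * x j) := by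
      have hlog := Real.log_le_log (hηpos (j+1)) (hηrec j)
      rw [Real.log_mul (by positivity) (ne_of_gt hmaxpos),
          Real.log_mul (by positivity) (ne_of_gt hrpos),
          Real.log_rpow hδjpos] at hlog
      have h2 : Real.log (max (κ₁ ^ δ (j+1)) (η j ^ θ)) ≤ max (δ (j+1) * L) (θ * x j) := by
        rcases max_choice (κ₁ ^ δ (j+1)) (η j ^ θ) with h | h <;> rw [h]
        · rw [Real.log_rpow hκ₁0, hLdef]; exact le_max_left _ _
        · rw [Real.log_rpow (hηpos j), hx]; exact le_max_right _ _
      rw [hx, hDdef]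
      linarith only [hlog, h2]
    -- bound on log δ (j+1)
    have h3 : Real.log (δ (j+1)) ≤ Real.log (A + |γ|) + ((j:ℝ)+1) * T := by
      have hAγ : (0:ℝ) < A + |γ| := by positivity
      have hle : δ (j+1) ≤ (A + |γ|) * θ ^ (j+1) := by
        have hp := hθpow1 (j+1)
        have := neg_abs_le γ
        rw [hδeq]; nlinarith [abs_nonneg γ]
      calc Real.log (δ (j+1)) ≤ Real.log ((A + |γ|) * θ ^ (j+1)) :=
            Real.log_le_log hδjpos hle
        _ = Real.log (A + |γ|) + ((j:ℝ)+1) * T := by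
            rw [Real.log_mul (ne_of_gt hAγ) (ne_of_gt (hθpowpos (j+1))), Real.log_pow, hTdef]
            push_cast; ring
    -- bound on the max term
    have h4 : max (δ (j+1) * L) (θ * x j) ≤ θ * z j + |c| * L := by
      apply max_le
      · have h4a : δ (j+1) = θ * δ j + c := hδrec j
        have h5 : δ j * L ≤ z j := hz j ▸ le_max_right _ _
        have h6 : c * L ≤ |c| * L := mul_le_mul_of_nonneg_right (le_abs_self c) hL0
        have h7 : θ * (δ j * L) ≤ θ * z j := mul_le_mul_of_nonneg_left h5 hθ0.le
        rw [h4a]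
        have : (θ * δ j + c) * L = θ * (δ j * L) + c * L := by ring
        linarith only [h6, h7, this]
      · have h5 : x j ≤ z j := hz j ▸ le_max_left _ _
        have h7 : θ * x j ≤ θ * z j := mul_le_mul_of_nonneg_left h5 hθ0.le
        have h8 : (0:ℝ) ≤ |c| * L := mul_nonneg (abs_nonneg c) hL0
        linarith only [h7, h8]
    have hj0 : (0:ℝ) ≤ (j:ℝ) := Nat.cast_nonneg j
    have hbT : 0 ≤ b * T := mul_nonneg hb hT0
    have h8 : b * Real.log (δ (j+1)) ≤ b * max (Real.log (A + |γ|)) 0 + b * T * ((j:ℝ)+1) := by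
      have h8a := mul_le_mul_of_nonneg_left h3 hb
      have h9 : b * Real.log (A + |γ|) ≤ b * max (Real.log (A + |γ|)) 0 :=
        mul_le_mul_of_nonneg_left (le_max_left _ _) hb
      have h8b : b * (Real.log (A + |γ|) + ((j:ℝ)+1) * T)
          = b * Real.log (A + |γ|) + b * T * ((j:ℝ)+1) := by ring
      linarith only [h8a, h9, h8b]
    have hRexp : R * ((j:ℝ)+2) = D + |c| * L + b * max (Real.log (A + |γ|)) 0
        + b * T * ((j:ℝ)+1) + (P * ((j:ℝ)+1) + b * T) := by
      rw [hRdef, hPdef]; ring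
    have e1 : 0 ≤ P * ((j:ℝ)+1) := mul_nonneg hP0 (by linarith only [hj0])
    have h7 : x (j+1) ≤ θ * z j + R * ((j:ℝ)+2) := by
      linarith only [h1, h4, h8, hRexp, e1, hbT]
    have h10 : δ (j+1) * L ≤ θ * z j + R * ((j:ℝ)+2) := by
      have h10a := h4.trans' (le_max_left (δ (j+1) * L) (θ * x j))
      have e2 : 0 ≤ b * max (Real.log (A + |γ|)) 0 := mul_nonneg hb (le_max_right _ _)
      have e3 : 0 ≤ b * T * ((j:ℝ)+1) := mul_nonneg hbT (by linarith only [hj0])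
      have e4 : 0 ≤ |c| * L := mul_nonneg (abs_nonneg c) hL0
      linarith only [h10a, hRexp, e1, e2, e3, hbT, hD0, e4]
    rw [hz]
    exact max_le h7 h10
  obtain ⟨S, hSdef⟩ : ∃ S : ℝ, S = R / (θ - 1) := ⟨_, rfl⟩
  obtain ⟨c₆, hc₆def⟩ : ∃ c₆ : ℝ, c₆ = 2 + 1 / (θ - 1) := ⟨_, rfl⟩
  obtain ⟨C, hCdef⟩ : ∃ C : ℝ, C = (z N + S * ((N:ℝ) + c₆)) / θ ^ N := ⟨_, rfl⟩
  have hSR : R = S * (θ - 1) := by rw [hSdef]; field_simp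
  have hc₆eq : (θ - 1) * c₆ = 2 * θ - 1 := by rw [hc₆def]; field_simp; ring
  have hS0 : 0 ≤ S := by rw [hSdef]; positivity
  have hc₆0 : 0 ≤ c₆ := by
    rw [hc₆def]; positivity
  have hzN0 : 0 ≤ z N := by
    have h1 : (1:ℝ) ≤ δ N := hδ1 N le_rfl
    have h2 : 0 ≤ δ N * L := mul_nonneg (by linarith) hL0
    have := hz N ▸ le_max_right (x N) (δ N * L)
    linarith
  have hC0 : 0 ≤ C := by
    rw [hCdef]
    have : 0 ≤ S * ((N:ℝ) + c₆) := mul_nonneg hS0 (by positivity)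
    positivity
  have hmain : ∀ j, N ≤ j → z j ≤ C * θ ^ j - S * ((j:ℝ) + c₆) := by
    intro j hj
    induction j, hj using Nat.le_induction with
    | base =>
      have hbase : C * θ ^ N = z N + S * ((N:ℝ) + c₆) := by
        rw [hCdef]; field_simp
      linarith
    | succ j hj ih =>
      have h1 := hstep j hj
      have h2 : θ * z j ≤ θ * (C * θ ^ j - S * ((j:ℝ) + c₆)) :=
        mul_le_mul_of_nonneg_left ih hθ0.le
      have key : θ * (C * θ ^ j - S * ((j:ℝ) + c₆)) + R * ((j:ℝ) + 2)
          = C * θ ^ (j+1) - S * ((j:ℝ) + 1 + c₆) := by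
        rw [pow_succ, hSR]
        linear_combination (-S) * hc₆eq
      push_cast
      linarith
  have hbound : ∀ j, N ≤ j → η j ^ (1 / δ j) ≤ Real.exp (2 * C / A) := by
    intro j hj
    have hδj : A / 2 * θ ^ j ≤ δ j := hδge j hj
    have hδjpos : (0:ℝ) < δ j := by nlinarith [hθpowpos j]
    have hxz : x j ≤ z j := hz j ▸ le_max_left _ _
    have hxC : x j ≤ C * θ ^ j := by
      have h1 := hmain j hj
      have h2 : 0 ≤ S * ((j:ℝ) + c₆) := mul_nonneg hS0 (by positivity)
      linarith
    have hdiv : x j / δ j ≤ 2 * C / A := by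
      have d1 : x j / δ j ≤ C * θ ^ j / δ j := div_le_div_of_nonneg_right hxC hδjpos.le
      have d2 : C * θ ^ j / δ j ≤ C * θ ^ j / (A / 2 * θ ^ j) :=
        div_le_div_of_nonneg_left (mul_nonneg hC0 (hθpowpos j).le)
          (by positivity) hδj
      have d3 : C * θ ^ j / (A / 2 * θ ^ j) = 2 * C / A := by
        field_simp
      linarith
    rw [Real.rpow_def_of_pos (hηpos j), mul_one_div, ← hx]
    exact Real.exp_le_exp.mpr hdiv
  refine ⟨max (Real.exp (2 * C / A))
      ((Finset.range (N+1)).sup' Finset.nonempty_range_add_one (fun j => η j ^ (1 / δ j))), ?_⟩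
  intro j
  rcases le_or_gt N j with h | h
  · exact le_max_of_le_left (hbound j h)
  · exact le_max_of_le_right
      (Finset.le_sup' (fun j => η j ^ (1 / δ j)) (Finset.mem_range.mpr (by omega)))
end

section
/- For all real numbers s, a > 0, one has 2·(Γ₁(s) − Γ₁(a)) − a·(Γ(s) − Γ(a)) − a·γ(a)·(s − a) ≥ 0. -/
theorem stmt_9 (γ γ' : ℝ → ℝ)
    (hderiv : ∀ s, 0 < s → HasDerivAt γ (γ' s) s)
    (hderivcont : ContinuousOn γ' (Set.Ioi 0))
    (hpos : ∀ s, 0 < s → 0 < γ s)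
    (hγ' : ∀ s, 0 < s → γ' s ≤ 0)
    (hγ₁' : ∀ s, 0 < s → 0 ≤ s * γ' s + γ s) :
    ∀ s a : ℝ, 0 < s → 0 < a →
      0 ≤ 2 * ((∫ η in (1:ℝ)..s, η * γ η) - (∫ η in (1:ℝ)..a, η * γ η))
          - a * ((∫ η in (1:ℝ)..s, γ η) - (∫ η in (1:ℝ)..a, γ η))
          - a * γ a * (s - a) := by
  have hcont : ContinuousOn γ (Set.Ioi 0) :=
    fun x hx => (hderiv x hx).continuousAt.continuousWithinAt
  have hcont2 : ContinuousOn (fun η => η * γ η) (Set.Ioi 0) :=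
    continuousOn_id.mul hcont
  -- monotonicity of η ↦ η * γ η
  have hmono : MonotoneOn (fun η => η * γ η) (Set.Ioi 0) := by
    apply monotoneOn_of_deriv_nonneg (convex_Ioi 0) hcont2
    · intro x hx
      rw [interior_Ioi] at hx
      exact ((hasDerivAt_id x).mul (hderiv x hx)).differentiableAt.differentiableWithinAt
    · intro x hx
      rw [interior_Ioi] at hx
      have hd : HasDerivAt (fun η => η * γ η) (1 * γ x + x * γ' x) x :=
        (hasDerivAt_id x).mul (hderiv x hx)
      rw [hd.deriv]
      have := hγ₁' x hx
      linarith
  have huIcc : ∀ b c : ℝ, 0 < b → 0 < c → Set.uIcc b c ⊆ Set.Ioi 0 := by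
    intro b c hb hc x hx
    exact lt_of_lt_of_le (lt_min hb hc) hx.1
  have hintγ : ∀ b c : ℝ, 0 < b → 0 < c →
      IntervalIntegrable γ MeasureTheory.volume b c := by
    intro b c hb hc
    exact (hcont.mono (huIcc b c hb hc)).intervalIntegrable
  have hintηγ : ∀ b c : ℝ, 0 < b → 0 < c →
      IntervalIntegrable (fun η => η * γ η) MeasureTheory.volume b c := by
    intro b c hb hc
    exact (hcont2.mono (huIcc b c hb hc)).intervalIntegrable
  intro s a hs ha
  have h1 : (∫ η in (1:ℝ)..s, η * γ η) - (∫ η in (1:ℝ)..a, η * γ η)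
      = ∫ η in a..s, η * γ η :=
    intervalIntegral.integral_interval_sub_left (hintηγ 1 s one_pos hs) (hintηγ 1 a one_pos ha)
  have h2 : (∫ η in (1:ℝ)..s, γ η) - (∫ η in (1:ℝ)..a, γ η) = ∫ η in a..s, γ η :=
    intervalIntegral.integral_interval_sub_left (hintγ 1 s one_pos hs) (hintγ 1 a one_pos ha)
  rw [h1, h2]
  have h4 : ∫ η in a..s, (2 * (η * γ η) - a * γ η - a * γ a)
      = 2 * (∫ η in a..s, η * γ η) - a * (∫ η in a..s, γ η) - a * γ a * (s - a) := by
    rw [intervalIntegral.integral_sub (((hintηγ a s ha hs).const_mul 2).sub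
        ((hintγ a s ha hs).const_mul a)) intervalIntegrable_const,
      intervalIntegral.integral_sub ((hintηγ a s ha hs).const_mul 2)
        ((hintγ a s ha hs).const_mul a),
      intervalIntegral.integral_const_mul, intervalIntegral.integral_const_mul,
      intervalIntegral.integral_const, smul_eq_mul]
    ring
  rw [← h4]
  rcases le_total a s with hle | hle
  · apply intervalIntegral.integral_nonneg hle
    intro x hx
    have hx0 : 0 < x := lt_of_lt_of_le ha hx.1
    have hm : a * γ a ≤ x * γ x := hmono ha hx0 hx.1
    have hg : 0 ≤ γ x := (hpos x hx0).le
    nlinarith [mul_nonneg (sub_nonneg.2 hx.1) hg]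
  · rw [intervalIntegral.integral_symm s a]
    have : 0 ≤ ∫ η in s..a, -(2 * (η * γ η) - a * γ η - a * γ a) := by
      apply intervalIntegral.integral_nonneg hle
      intro x hx
      have hx0 : 0 < x := lt_of_lt_of_le hs hx.1
      have hm : x * γ x ≤ a * γ a := hmono hx0 ha hx.2
      have hg : 0 ≤ γ x := (hpos x hx0).le
      nlinarith [mul_nonneg (sub_nonneg.2 hx.2) hg]
    rw [intervalIntegral.integral_neg] at this
    linarith
end
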